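/- Let ε : ℝ → ℝ be nonnegative, measurable, and integrable on [0, ∞), and let f : ℝ → ℝ be a nonnegative measurable probability density on [0, ∞) (that is, ∫_0^∞ f = 1), with cumulative distribution function F(c) = ∫_0^c f(z) dz. Assume c ↦ c·ε(c)·f(c) is integrable on [0, ∞). Define t(c) = c·ε(c) + ∫_c^∞ ε(z) dz. Then the expected payment equals the expected virtual cost weighted privacy: ∫_0^∞ t(c)·f(c) dc = ∫_0^∞ ε(z)·(z·f(z) + F(z)) dz. -/
import Mathlib

open MeasureTheory

theorem stmt_5 (ε : ℝ → ℝ) (hεnn : ∀ c, 0 ≤ ε c) (hεmeas : Measurable ε)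
    (hεint : IntegrableOn ε (Set.Ici 0))
    (f : ℝ → ℝ) (hfnn : ∀ c, 0 ≤ f c) (hfmeas : Measurable f)
    (hfprob : ∫ c in Set.Ici 0, f c = 1)
    (F : ℝ → ℝ) (hF : ∀ c, F c = ∫ z in (0 : ℝ)..c, f z)
    (hint : IntegrableOn (fun c => c * ε c * f c) (Set.Ici 0))
    (t : ℝ → ℝ) (ht : ∀ c, t c = c * ε c + ∫ z in Set.Ioi c, ε z) :
    ∫ c in Set.Ioi 0, t c * f c = ∫ z in Set.Ioi 0, ε z * (z * f z + F z) := by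
  set eε : ℝ → ENNReal := fun z => ENNReal.ofReal (ε z) with heεdef
  set ef : ℝ → ENNReal := fun z => ENNReal.ofReal (f z) with hefdef
  have heεm : Measurable eε := ENNReal.measurable_ofReal.comp hεmeas
  have hefm : Measurable ef := ENNReal.measurable_ofReal.comp hfmeas
  -- f is integrable on Ici 0
  have hfint : IntegrableOn f (Set.Ici 0) := by
    by_contra h
    rw [integral_undef h] at hfprob
    norm_num at hfprob
  -- tail lintegral is antitone hence measurable
  have hGanti : Antitone (fun c => ∫⁻ z in Set.Ioi c, eε z) := by
    intro a b hab
    exact lintegral_mono_set (fun x hx => lt_of_le_of_lt hab hx)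
  have hGm : Measurable (fun c : ℝ => ∫⁻ z in Set.Ioi c, eε z) := hGanti.measurable
  -- for c ≥ 0, the tail integral converts to a lintegral
  have htailsub : ∀ c : ℝ, 0 ≤ c → Set.Ioi c ⊆ Set.Ici (0:ℝ) :=
    fun c hc x hx => le_of_lt (lt_of_le_of_lt hc hx)
  have htail : ∀ c : ℝ, 0 ≤ c →
      ENNReal.ofReal (∫ z in Set.Ioi c, ε z) = ∫⁻ z in Set.Ioi c, eε z := by
    intro c hc
    exact ofReal_integral_eq_lintegral_ofReal (hεint.mono_set (htailsub c hc))
      (Filter.Eventually.of_forall fun x => hεnn x)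
  have htailnn : ∀ c : ℝ, 0 ≤ ∫ z in Set.Ioi c, ε z :=
    fun c => setIntegral_nonneg measurableSet_Ioi fun x _ => hεnn x
  have htail' : ∀ c : ℝ, 0 ≤ c →
      ∫ z in Set.Ioi c, ε z = (∫⁻ z in Set.Ioi c, eε z).toReal := by
    intro c hc
    rw [← htail c hc, ENNReal.toReal_ofReal (htailnn c)]
  -- F converts to a lintegral
  have hFnn : ∀ z : ℝ, 0 < z → 0 ≤ F z := by
    intro z hz
    rw [hF z]
    exact intervalIntegral.integral_nonneg hz.le fun x _ => hfnn x
  have hFeq : ∀ z : ℝ, 0 < z → ENNReal.ofReal (F z) = ∫⁻ x in Set.Ioo 0 z, ef x := by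
    intro z hz
    rw [hF z, intervalIntegral.integral_of_le hz.le, MeasureTheory.integral_Ioc_eq_integral_Ioo]
    exact ofReal_integral_eq_lintegral_ofReal
      (hfint.mono_set (fun x hx => le_of_lt hx.1))
      (Filter.Eventually.of_forall fun x => hfnn x)
  have hFeq' : ∀ z : ℝ, 0 < z → F z = (∫⁻ x in Set.Ioo 0 z, ef x).toReal := by
    intro z hz
    rw [← hFeq z hz, ENNReal.toReal_ofReal (hFnn z hz)]
  have hFmono : Monotone (fun z : ℝ => ∫⁻ x in Set.Ioo 0 z, ef x) := by
    intro a b hab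
    exact lintegral_mono_set (Set.Ioo_subset_Ioo le_rfl hab)
  have hFm : Measurable (fun z : ℝ => ∫⁻ x in Set.Ioo 0 z, ef x) := hFmono.measurable
  -- LHS as a lintegral
  have hLHS : ∫ c in Set.Ioi 0, t c * f c
      = (∫⁻ c in Set.Ioi 0, ENNReal.ofReal (t c * f c)).toReal := by
    rw [integral_eq_lintegral_of_nonneg_ae]
    · filter_upwards [ae_restrict_mem measurableSet_Ioi] with c hc
      have : 0 ≤ t c := by
        rw [ht c]
        exact add_nonneg (mul_nonneg (le_of_lt hc) (hεnn c)) (htailnn c)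
      exact mul_nonneg this (hfnn c)
    · have gm : Measurable (fun c : ℝ =>
          (c * ε c + (∫⁻ z in Set.Ioi c, eε z).toReal) * f c) := by
        exact (((measurable_id.mul hεmeas).add hGm.ennreal_toReal).mul hfmeas)
      refine gm.aestronglyMeasurable.congr ?_
      filter_upwards [ae_restrict_mem measurableSet_Ioi] with c hc
      rw [ht c, htail' c hc.le]
  -- RHS as a lintegral
  have hRHS : ∫ z in Set.Ioi 0, ε z * (z * f z + F z)
      = (∫⁻ z in Set.Ioi 0, ENNReal.ofReal (ε z * (z * f z + F z))).toReal := by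
    rw [integral_eq_lintegral_of_nonneg_ae]
    · filter_upwards [ae_restrict_mem measurableSet_Ioi] with z hz
      exact mul_nonneg (hεnn z)
        (add_nonneg (mul_nonneg hz.le (hfnn z)) (hFnn z hz))
    · have gm : Measurable (fun z : ℝ =>
          ε z * (z * f z + (∫⁻ x in Set.Ioo 0 z, ef x).toReal)) := by
        exact hεmeas.mul ((measurable_id.mul hfmeas).add hFm.ennreal_toReal)
      refine gm.aestronglyMeasurable.congr ?_
      filter_upwards [ae_restrict_mem measurableSet_Ioi] with z hz
      rw [hFeq' z hz]
  -- key lintegral identity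
  have key : ∫⁻ c in Set.Ioi 0, ENNReal.ofReal (t c * f c)
      = ∫⁻ z in Set.Ioi 0, ENNReal.ofReal (ε z * (z * f z + F z)) := by
    -- split LHS
    have hL1 : ∫⁻ c in Set.Ioi 0, ENNReal.ofReal (t c * f c)
        = (∫⁻ c in Set.Ioi 0, ENNReal.ofReal (c * ε c * f c))
          + ∫⁻ c in Set.Ioi 0, (∫⁻ z in Set.Ioi c, eε z) * ef c := by
      have hm : Measurable fun c : ℝ => ENNReal.ofReal (c * ε c * f c) :=
        ((measurable_id.mul hεmeas).mul hfmeas).ennreal_ofReal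
      rw [← lintegral_add_left hm]
      refine lintegral_congr_ae ?_
      filter_upwards [ae_restrict_mem measurableSet_Ioi] with c hc
      rw [ht c, add_mul, ENNReal.ofReal_add
        (mul_nonneg (mul_nonneg hc.le (hεnn c)) (hfnn c))
        (mul_nonneg (htailnn c) (hfnn c)),
        ENNReal.ofReal_mul (htailnn c), htail c hc.le]
    -- split RHS
    have hR1 : ∫⁻ z in Set.Ioi 0, ENNReal.ofReal (ε z * (z * f z + F z))
        = (∫⁻ z in Set.Ioi 0, ENNReal.ofReal (z * ε z * f z))
          + ∫⁻ z in Set.Ioi 0, eε z * ENNReal.ofReal (F z) := by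
      have hm : Measurable fun z : ℝ => ENNReal.ofReal (z * ε z * f z) :=
        ((measurable_id.mul hεmeas).mul hfmeas).ennreal_ofReal
      rw [← lintegral_add_left hm]
      refine lintegral_congr_ae ?_
      filter_upwards [ae_restrict_mem measurableSet_Ioi] with z hz
      rw [mul_add, ENNReal.ofReal_add
        (mul_nonneg (hεnn z) (mul_nonneg hz.le (hfnn z)))
        (mul_nonneg (hεnn z) (hFnn z hz))]
      congr 1
      · congr 1
        ring
      · exact ENNReal.ofReal_mul (hεnn z)
    rw [hL1, hR1]
    congr 1
    -- Fubini step
    have hRr : ∫⁻ z in Set.Ioi 0, eε z * ENNReal.ofReal (F z)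
        = ∫⁻ z in Set.Ioi 0, eε z * ∫⁻ x in Set.Ioo 0 z, ef x := by
      refine lintegral_congr_ae ?_
      filter_upwards [ae_restrict_mem measurableSet_Ioi] with z hz
      rw [hFeq z hz]
    rw [hRr]
    set H : ℝ → ℝ → ENNReal := fun c z => (Set.Ioi c).indicator eε z * ef c with hHdef
    have hHm : Measurable (Function.uncurry H) := by
      have : Function.uncurry H = fun p : ℝ × ℝ =>
          ({q : ℝ × ℝ | q.1 < q.2}.indicator (fun q => eε q.2) p) * ef p.1 := by
        funext p
        by_cases h : p.1 < p.2
        · simp [hHdef, Function.uncurry, Set.indicator_of_mem, h, Set.mem_Ioi,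
            Set.mem_setOf_eq]
        · simp [hHdef, Function.uncurry, Set.indicator_of_notMem, h, Set.mem_Ioi,
            Set.mem_setOf_eq]
      rw [this]
      exact ((heεm.comp measurable_snd).indicator
        (measurableSet_lt measurable_fst measurable_snd)).mul (hefm.comp measurable_fst)
    have e1 : ∫⁻ c in Set.Ioi 0, (∫⁻ z in Set.Ioi c, eε z) * ef c
        = ∫⁻ c in Set.Ioi 0, ∫⁻ z in Set.Ioi 0, H c z := by
      refine lintegral_congr_ae ?_
      filter_upwards [ae_restrict_mem measurableSet_Ioi] with c hc
      have h1 : ∀ z : ℝ, H c z = (Set.Ioi c).indicator (fun z => eε z * ef c) z := by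
        intro z
        by_cases h : z ∈ Set.Ioi c
        · simp [hHdef, Set.indicator_of_mem h]
        · simp [hHdef, Set.indicator_of_notMem h]
      calc (∫⁻ z in Set.Ioi c, eε z) * ef c
          = ∫⁻ z in Set.Ioi c, eε z * ef c := (lintegral_mul_const _ heεm).symm
        _ = ∫⁻ z in Set.Ioi 0, H c z := by
            have h2 : ∫⁻ z in Set.Ioi 0, (Set.Ioi c).indicator (fun z => eε z * ef c) z
                = ∫⁻ z in Set.Ioi c, eε z * ef c := by
              rw [lintegral_indicator measurableSet_Ioi,
                Measure.restrict_restrict measurableSet_Ioi, Set.Ioi_inter_Ioi,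
                sup_eq_left.mpr hc.le]
            rw [← h2]
            exact (lintegral_congr h1).symm
    have e2 : ∫⁻ z in Set.Ioi 0, ∫⁻ c in Set.Ioi 0, H c z
        = ∫⁻ z in Set.Ioi 0, eε z * ∫⁻ x in Set.Ioo 0 z, ef x := by
      refine lintegral_congr_ae ?_
      filter_upwards [ae_restrict_mem measurableSet_Ioi] with z hz
      have h1 : ∀ c : ℝ, H c z = (Set.Iio z).indicator (fun c => eε z * ef c) c := by
        intro c
        by_cases h : c < z
        · simp [hHdef, Set.indicator_of_mem, h, Set.mem_Ioi, Set.mem_Iio]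
        · simp [hHdef, Set.indicator_of_notMem, h, Set.mem_Ioi, Set.mem_Iio]
      calc ∫⁻ c in Set.Ioi 0, H c z
          = ∫⁻ c in Set.Ioi 0, (Set.Iio z).indicator (fun c => eε z * ef c) c :=
            lintegral_congr h1
        _ = ∫⁻ c in Set.Ioo 0 z, eε z * ef c := by
            rw [lintegral_indicator measurableSet_Iio,
              Measure.restrict_restrict measurableSet_Iio, Set.Iio_inter_Ioi]
        _ = eε z * ∫⁻ x in Set.Ioo 0 z, ef x := lintegral_const_mul _ hefm
    rw [e1, lintegral_lintegral_swap hHm.aemeasurable, e2]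
  rw [hLHS, hRHS, key]
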